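/- Let X be a random variable, q₀, qₙ : 𝒳 → ℝ measurable, and Y integrable. Define f₍qₙ,q₀₎(x) = E[Y | qₙ(X) = qₙ(x), q₀(X) = q₀(x)] and f₍qₙ₎(x) = E[Y | qₙ(X) = qₙ(x)]. Suppose the map (t₁,t₂) ↦ E[f₍qₙ,q₀₎(X) | qₙ(X)=t₁, q₀(X)=t₂] is L-Lipschitz on ℝ². Then ‖f₍qₙ₎ - f₍qₙ,q₀₎‖_{L²(P)} ≤ 2L · ‖qₙ - q₀‖_{L²(P)}. -/

import Mathlib

open MeasureTheory
open scoped ENNReal NNReal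

lemma eLpNorm_two_condexp_le {α : Type*} {m m0 : MeasurableSpace α} {μ : Measure α}
    [IsFiniteMeasure μ] (hm : m ≤ m0) {f : α → ℝ} (hf : MemLp f 2 μ) :
    eLpNorm (μ[f|m]) 2 μ ≤ eLpNorm f 2 μ := by
  have hint : Integrable f μ := hf.integrable one_le_two
  set fL : Lp ℝ 2 μ := hf.toLp f with hfL
  have h1 : (condExpL2 ℝ ℝ hm fL : α → ℝ) =ᵐ[μ] μ[f|m] := by
    refine ae_eq_condExp_of_forall_setIntegral_eq hm hint
      (fun s _ hμs => integrableOn_condExpL2_of_measure_ne_top hm hμs.ne _)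
      (fun s hs hμs => ?_) (aestronglyMeasurable_condExpL2 hm fL)
    rw [integral_condExpL2_eq_of_fin_meas_real _ hs hμs.ne]
    exact setIntegral_congr_ae (hm s hs) ((hf.coeFn_toLp).mono fun x hx _ => hx)
  calc eLpNorm (μ[f|m]) 2 μ
      = eLpNorm (condExpL2 ℝ ℝ hm fL : α → ℝ) 2 μ := (eLpNorm_congr_ae h1).symm
    _ ≤ eLpNorm (fL : α → ℝ) 2 μ := eLpNorm_condExpL2_le hm fL
    _ = eLpNorm f 2 μ := eLpNorm_congr_ae hf.coeFn_toLp

lemma approx_key {Ω : Type*} {m₁ m₂ m0 : MeasurableSpace Ω}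
    {μ : @MeasureTheory.Measure Ω m0} [IsProbabilityMeasure μ]
    (hm₁₂ : m₁ ≤ m₂) (hm₂ : m₂ ≤ m0)
    {Y G h : Ω → ℝ} (hGmeas : Measurable[m0] G)
    (hhsm : StronglyMeasurable[m₁] h)
    (hGY : G =ᵐ[μ] μ[Y|m₂])
    {B : ℝ≥0∞} (hB : B ≠ ⊤)
    (hDnorm : eLpNorm (fun ω => G ω - h ω) 2 μ ≤ B) :
    eLpNorm (fun ω => (μ[Y|m₁]) ω - (μ[Y|m₂]) ω) 2 μ ≤ 2 * B := by
  have hm₁ : m₁ ≤ m0 := hm₁₂.trans hm₂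
  haveI : SigmaFinite (μ.trim hm₁) := by infer_instance
  haveI : SigmaFinite (μ.trim hm₂) := by infer_instance
  have hDsm : AEStronglyMeasurable (fun ω => G ω - h ω) μ :=
    (hGmeas.stronglyMeasurable.sub (hhsm.mono hm₁)).aestronglyMeasurable
  have hDmem : MemLp (fun ω => G ω - h ω) 2 μ :=
    ⟨hDsm, lt_of_le_of_lt hDnorm (lt_top_iff_ne_top.mpr hB)⟩
  have hGint : Integrable G μ := integrable_condExp.congr hGY.symm
  have hDint : Integrable (fun ω => G ω - h ω) μ := hDmem.integrable one_le_two
  have hhint : Integrable h μ := by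
    have heq : h = fun ω => G ω - (G ω - h ω) := by funext ω; ring
    rw [heq]; exact hGint.sub hDint
  have hh_ce : μ[h|m₁] = h := condExp_of_stronglyMeasurable hm₁ hhsm hhint
  have htower : μ[Y|m₁] =ᵐ[μ] μ[G|m₁] :=
    (condExp_condExp_of_le hm₁₂ hm₂).symm.trans (condExp_congr_ae hGY.symm)
  have hsub : μ[fun ω => G ω - h ω|m₁] =ᵐ[μ] fun ω => (μ[G|m₁]) ω - h ω := by
    have := condExp_sub (μ := μ) (m := m₁) hGint hhint
    rw [hh_ce] at this
    exact this
  have hmain : (fun ω => (μ[Y|m₁]) ω - (μ[Y|m₂]) ω)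
      =ᵐ[μ] fun ω => (μ[fun ω' => G ω' - h ω'|m₁]) ω - (G ω - h ω) := by
    filter_upwards [htower, hsub, hGY] with ω h1 h2 h3
    rw [h1, h2, ← h3]
    ring
  calc eLpNorm (fun ω => (μ[Y|m₁]) ω - (μ[Y|m₂]) ω) 2 μ
      = eLpNorm (fun ω => (μ[fun ω' => G ω' - h ω'|m₁]) ω - (G ω - h ω)) 2 μ :=
        eLpNorm_congr_ae hmain
    _ ≤ eLpNorm (μ[fun ω' => G ω' - h ω'|m₁]) 2 μ
        + eLpNorm (fun ω => G ω - h ω) 2 μ :=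
        eLpNorm_sub_le (stronglyMeasurable_condExp.mono hm₁).aestronglyMeasurable
          hDsm one_le_two
    _ ≤ B + B :=
        add_le_add ((eLpNorm_two_condexp_le hm₁ hDmem).trans hDnorm) hDnorm
    _ = 2 * B := (two_mul B).symm

theorem lipschitz_feature_approximation
    {Ω 𝒳 : Type*} [MeasurableSpace Ω] [MeasurableSpace 𝒳]
    (μ : Measure Ω) [IsProbabilityMeasure μ]
    (X : Ω → 𝒳) (hX : Measurable X)
    (q₀ qₙ : 𝒳 → ℝ) (hq₀ : Measurable q₀) (hqₙ : Measurable qₙ)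
    (Y : Ω → ℝ) (hY : Integrable Y μ)
    (L : ℝ≥0) (g : ℝ × ℝ → ℝ) (hg : LipschitzWith L g)
    (hgver : (fun ω => g (qₙ (X ω), q₀ (X ω))) =ᵐ[μ]
      μ[Y | MeasurableSpace.comap (fun ω => (qₙ (X ω), q₀ (X ω)))
            (borel (ℝ × ℝ))]) :
    eLpNorm (fun ω =>
        (μ[Y | MeasurableSpace.comap (fun ω' => qₙ (X ω')) (borel ℝ)]) ω -
        (μ[Y | MeasurableSpace.comap (fun ω' => (qₙ (X ω'), q₀ (X ω')))
              (borel (ℝ × ℝ))]) ω) 2 μ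
      ≤ (2 * L : ℝ≥0) * eLpNorm (fun ω => qₙ (X ω) - q₀ (X ω)) 2 μ := by
  have hborelR : borel ℝ = (inferInstance : MeasurableSpace ℝ) :=
    BorelSpace.measurable_eq.symm
  have hborelP : borel (ℝ × ℝ) = (inferInstance : MeasurableSpace (ℝ × ℝ)) :=
    BorelSpace.measurable_eq.symm
  have hpmeas : Measurable (fun ω => (qₙ (X ω), q₀ (X ω))) :=
    (hqₙ.comp hX).prodMk (hq₀.comp hX)
  have hm₂ : MeasurableSpace.comap (fun ω => (qₙ (X ω), q₀ (X ω))) (borel (ℝ × ℝ))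
      ≤ ‹MeasurableSpace Ω› := by
    rw [hborelP]; exact hpmeas.comap_le
  have hm₁₂ : MeasurableSpace.comap (fun ω => qₙ (X ω)) (borel ℝ)
      ≤ MeasurableSpace.comap (fun ω => (qₙ (X ω), q₀ (X ω))) (borel (ℝ × ℝ)) := by
    have heq : (fun ω => qₙ (X ω))
        = Prod.fst ∘ (fun ω => (qₙ (X ω), q₀ (X ω))) := rfl
    rw [heq, ← MeasurableSpace.comap_comp]
    refine MeasurableSpace.comap_mono ?_
    rw [hborelR, hborelP]
    exact (measurable_fst (α := ℝ) (β := ℝ)).comap_le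
  by_cases htop : (L : ℝ≥0∞) * eLpNorm (fun ω => qₙ (X ω) - q₀ (X ω)) 2 μ = ⊤
  · rcases ENNReal.mul_eq_top.mp htop with ⟨hL, hE⟩ | ⟨hL, _⟩
    swap
    · exact absurd hL ENNReal.coe_ne_top
    · have hRtop : ((2 * L : ℝ≥0) : ℝ≥0∞)
          * eLpNorm (fun ω => qₙ (X ω) - q₀ (X ω)) 2 μ = ⊤ := by
        rw [hE, ENNReal.mul_top]
        intro hc
        exact hL (by simpa using hc)
      rw [hRtop]
      exact le_top
  · -- bound on the difference function
    have hDbound : ∀ ω, ‖g (qₙ (X ω), q₀ (X ω)) - g (qₙ (X ω), qₙ (X ω))‖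
        ≤ ‖(L : ℝ) * (qₙ (X ω) - q₀ (X ω))‖ := by
      intro ω
      have hd := hg.dist_le_mul (qₙ (X ω), q₀ (X ω)) (qₙ (X ω), qₙ (X ω))
      simp only [Prod.dist_eq, Real.dist_eq, sub_self, abs_zero] at hd
      rw [max_eq_right (abs_nonneg _)] at hd
      rw [Real.norm_eq_abs, Real.norm_eq_abs, abs_mul,
        abs_of_nonneg (L.coe_nonneg)]
      calc |g (qₙ (X ω), q₀ (X ω)) - g (qₙ (X ω), qₙ (X ω))|
          ≤ (L : ℝ) * |q₀ (X ω) - qₙ (X ω)| := hd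
        _ = (L : ℝ) * |qₙ (X ω) - q₀ (X ω)| := by rw [abs_sub_comm]
    have hDnorm : eLpNorm
        (fun ω => g (qₙ (X ω), q₀ (X ω)) - g (qₙ (X ω), qₙ (X ω))) 2 μ
        ≤ (L : ℝ≥0∞) * eLpNorm (fun ω => qₙ (X ω) - q₀ (X ω)) 2 μ := by
      calc eLpNorm (fun ω => g (qₙ (X ω), q₀ (X ω)) - g (qₙ (X ω), qₙ (X ω))) 2 μ
          ≤ eLpNorm (fun ω => (L : ℝ) * (qₙ (X ω) - q₀ (X ω))) 2 μ :=
            eLpNorm_mono hDbound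
        _ = eLpNorm ((L : ℝ) • fun ω => qₙ (X ω) - q₀ (X ω)) 2 μ := rfl
        _ ≤ (L : ℝ≥0∞) * eLpNorm (fun ω => qₙ (X ω) - q₀ (X ω)) 2 μ := by
            rw [eLpNorm_const_smul]
            simp [smul_eq_mul, NNReal.nnnorm_eq]
    have hGmeas : Measurable (fun ω => g (qₙ (X ω), q₀ (X ω))) :=
      hg.continuous.measurable.comp hpmeas
    have hhsm : StronglyMeasurable[MeasurableSpace.comap (fun ω => qₙ (X ω)) (borel ℝ)]
        (fun ω => g (qₙ (X ω), qₙ (X ω))) := by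
      have h1 : Measurable[MeasurableSpace.comap (fun ω => qₙ (X ω)) (borel ℝ)]
          (fun ω => qₙ (X ω)) := by
        rw [hborelR]
        exact comap_measurable _
      have h2 : Measurable (fun t : ℝ => g (t, t)) :=
        hg.continuous.measurable.comp (measurable_id.prodMk measurable_id)
      exact (h2.comp h1).stronglyMeasurable
    have key := approx_key hm₁₂ hm₂ hGmeas hhsm hgver htop hDnorm
    refine key.trans (le_of_eq ?_)
    push_cast
    ring
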